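/- For all m, n ≥ 1, the mode η_{m,n} of the independence polynomial of the lollipop graph L_{m,n} satisfies η_{m,n} ∈ {λ_n, λ_n + 1}, where λ_n is the mode of the independence polynomial of the path P_n. -/

import Mathlib

open Polynomial

open Classical in
/-- The independence polynomial of a finite simple graph. -/
noncomputable def indepPoly {V : Type} [Fintype V] (G : SimpleGraph V) : Polynomial ℕ :=
  ∑ s : Finset V, if (∀ i ∈ s, ∀ j ∈ s, ¬ G.Adj i j) then (X : Polynomial ℕ) ^ s.card else 0

/-- The lollipop graph `L_{m,n}`: a complete graph `K_m` joined to a path `P_n` by a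
bridge between vertex `m-1` of `K_m` and the endpoint `0` of the path. -/
def lollipop (m n : ℕ) : SimpleGraph (Fin m ⊕ Fin n) :=
  SimpleGraph.fromRel (fun x y =>
    match x, y with
    | Sum.inl _, Sum.inl _ => True
    | Sum.inr i, Sum.inr j => (j : ℕ) = (i : ℕ) + 1
    | Sum.inl i, Sum.inr j => (i : ℕ) = m - 1 ∧ (j : ℕ) = 0
    | Sum.inr _, Sum.inl _ => False)

/-- `i` is the mode of the coefficient sequence of `p`:
`a_{i-1} < a_i ≥ a_{i+1} ≥ ⋯` (with the convention `a₋₁ = 0`). -/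
def PolyIsMode (p : Polynomial ℕ) (i : ℕ) : Prop :=
  (i = 0 → 0 < p.coeff 0) ∧ (∀ k, i = k + 1 → p.coeff k < p.coeff (k + 1)) ∧
    (∀ j, i ≤ j → p.coeff (j + 1) ≤ p.coeff j)

open Finset

def NoTwo (s : Finset ℕ) : Prop := ∀ i ∈ s, i + 1 ∉ s

lemma noTwo_subset {s t : Finset ℕ} (h : s ⊆ t) (ht : NoTwo t) : NoTwo s :=
  fun i hi hc => ht i (h hi) (h hc)

open Classical in
lemma noTwo_count (a : ℕ) : ∀ b k : ℕ,
    ((Finset.Ico a b).powerset.filter (fun s => NoTwo s ∧ s.card = k)).card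
      = Nat.choose (b - a + 1 - k) k := by
  classical
  intro b
  induction b using Nat.strong_induction_on with
  | _ b ih =>
  intro k
  match k with
  | 0 =>
    have : ((Finset.Ico a b).powerset.filter (fun s => NoTwo s ∧ s.card = 0)) = {∅} := by
      ext s
      simp only [mem_filter, mem_powerset, Finset.card_eq_zero, mem_singleton]
      constructor
      · rintro ⟨-, -, rfl⟩; rfl
      · rintro rfl
        exact ⟨empty_subset _, fun i hi => absurd hi (notMem_empty i), rfl⟩
    rw [this]; simp
  | (k+1) =>
    by_cases hb : b ≤ a
    · have he : Finset.Ico a b = ∅ := by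
        rw [Finset.Ico_eq_empty_iff]; omega
      have : ((Finset.Ico a b).powerset.filter (fun s => NoTwo s ∧ s.card = k + 1)) = ∅ := by
        ext s
        simp only [he, powerset_empty, mem_filter, mem_singleton, notMem_empty, iff_false]
        rintro ⟨rfl, -, hc⟩
        simp at hc
      rw [this]
      have h0 : b - a + 1 - (k+1) = 0 := by omega
      rw [h0]
      simp
    · push_neg at hb
      by_cases hb1 : b = a + 1
      · subst hb1
        have he : Finset.Ico a (a+1) = {a} := by simp
        match k with
        | 0 =>
          have : ((Finset.Ico a (a+1)).powerset.filter (fun s => NoTwo s ∧ s.card = 1)) = {{a}} := by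
            ext s
            simp only [he, mem_filter, mem_powerset, mem_singleton, Finset.card_eq_one,
              Finset.subset_singleton_iff]
            constructor
            · rintro ⟨(rfl | rfl), -, c, hc⟩
              · exact absurd hc.symm (Finset.singleton_ne_empty c)
              · rfl
            · rintro rfl
              refine ⟨Or.inr rfl, ?_, a, rfl⟩
              intro i hi
              simp only [mem_singleton] at hi ⊢
              omega
          rw [this]; simp
        | (k+1) =>
          have : ((Finset.Ico a (a+1)).powerset.filter (fun s => NoTwo s ∧ s.card = k+2)) = ∅ := by
            ext s
            simp only [he, mem_filter, mem_powerset, notMem_empty, iff_false,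
              Finset.subset_singleton_iff]
            rintro ⟨(rfl | rfl), -, hc⟩ <;> simp at hc
          rw [this]
          have h2 : a + 1 - a + 1 - (k+2) = 0 := by omega
          simp [h2, Nat.choose_eq_zero_of_lt]
      · -- b = b' + 1, b' ≥ a + 1
        obtain ⟨b', rfl⟩ : ∃ b', b = b' + 1 := ⟨b - 1, by omega⟩
        have hb' : a + 1 ≤ b' := by omega
        have hsplit := Finset.card_filter_add_card_filter_not
          (s := (Finset.Ico a (b'+1)).powerset.filter (fun s => NoTwo s ∧ s.card = k+1))
          (p := fun s => b' ∈ s)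
        -- piece without b'
        have hno : (((Finset.Ico a (b'+1)).powerset.filter
              (fun s => NoTwo s ∧ s.card = k+1)).filter (fun s => ¬ b' ∈ s))
            = (Finset.Ico a b').powerset.filter (fun s => NoTwo s ∧ s.card = k+1) := by
          ext s
          simp only [mem_filter, mem_powerset, and_assoc]
          constructor
          · rintro ⟨hsub, h1, h2, h3⟩
            refine ⟨fun x hx => ?_, h1, h2⟩
            have hx2 := hsub hx
            simp only [Finset.mem_Ico] at hx2 ⊢
            have : x ≠ b' := fun h => h3 (h ▸ hx)
            omega
          · rintro ⟨hsub, h1, h2⟩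
            refine ⟨fun x hx => ?_, h1, h2, fun hc => ?_⟩
            · have hx2 := hsub hx
              simp only [Finset.mem_Ico] at hx2 ⊢
              omega
            · have hx2 := hsub hc
              simp only [Finset.mem_Ico] at hx2
              omega
        -- piece with b' : biject with subsets of Ico a (b'-1)
        have hyes : ((((Finset.Ico a (b'+1)).powerset.filter
              (fun s => NoTwo s ∧ s.card = k+1)).filter (fun s => b' ∈ s)).card)
            = ((Finset.Ico a (b'-1)).powerset.filter (fun s => NoTwo s ∧ s.card = k)).card := by
          apply Finset.card_bij (fun s _ => s.erase b')
          · rintro s hs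
            simp only [mem_filter, mem_powerset] at hs
            obtain ⟨⟨hsub, hnt, hcard⟩, hmem⟩ := hs
            simp only [mem_filter, mem_powerset]
            refine ⟨fun x hx => ?_, noTwo_subset (Finset.erase_subset _ _) hnt, ?_⟩
            · have hxs := Finset.mem_of_mem_erase hx
              have hxne := Finset.ne_of_mem_erase hx
              have hx2 := hsub hxs
              simp only [Finset.mem_Ico] at hx2 ⊢
              have hx1 : x ≠ b' - 1 := by
                intro h
                have hxx : x + 1 = b' := by omega
                exact hnt x hxs (hxx ▸ hmem)
              omega
            · rw [Finset.card_erase_of_mem hmem, hcard]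
              omega
          · intro s hs t ht h
            simp only [mem_filter] at hs ht
            rw [← Finset.insert_erase hs.2, ← Finset.insert_erase ht.2, h]
          · intro t ht
            simp only [mem_filter, mem_powerset] at ht
            obtain ⟨hsub, hnt, hcard⟩ := ht
            have hb'n : b' ∉ t := by
              intro hc
              have := hsub hc
              simp only [Finset.mem_Ico] at this
              omega
            refine ⟨insert b' t, ?_, by rw [Finset.erase_insert hb'n]⟩
            simp only [mem_filter, mem_powerset]
            refine ⟨⟨fun x hx => ?_, ?_, ?_⟩, Finset.mem_insert_self _ _⟩
            · rcases Finset.mem_insert.mp hx with rfl | hx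
              · simp only [Finset.mem_Ico]; omega
              · have := hsub hx
                simp only [Finset.mem_Ico] at this ⊢
                omega
            · intro i hi
              rcases Finset.mem_insert.mp hi with rfl | hi
              · intro hc
                rcases Finset.mem_insert.mp hc with h | h
                · omega
                · have := hsub h; simp only [Finset.mem_Ico] at this; omega
              · intro hc
                rcases Finset.mem_insert.mp hc with h | h
                · have := hsub hi; simp only [Finset.mem_Ico] at this; omega
                · exact hnt i hi h
            · rw [Finset.card_insert_of_notMem hb'n, hcard]
        have ihno := ih b' (by omega) (k+1)
        have ihyes := ih (b'-1) (by omega) k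
        rw [hno, ihno] at hsplit
        rw [hyes, ihyes] at hsplit
        -- arithmetic
        rcases le_or_gt (k+1) (b' - a) with hk | hk
        · have e1 : b' + 1 - a + 1 - (k+1) = (b' - a - k) + 1 := by omega
          have e2 : b' - a + 1 - (k+1) = b' - a - k := by omega
          have e3 : b' - 1 - a + 1 - k = b' - a - k := by omega
          rw [e1, Nat.choose_succ_succ, Nat.succ_eq_add_one]
          rw [e2, e3] at hsplit
          omega
        · have e1 : Nat.choose (b' + 1 - a + 1 - (k+1)) (k+1) = 0 := by
            apply Nat.choose_eq_zero_of_lt; omega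
          have e2 : Nat.choose (b' - a + 1 - (k+1)) (k+1) = 0 := by
            apply Nat.choose_eq_zero_of_lt; omega
          have e3 : Nat.choose (b' - 1 - a + 1 - k) k = 0 := by
            apply Nat.choose_eq_zero_of_lt; omega
          rw [e1]
          rw [e2, e3] at hsplit
          omega

lemma ratio_eq (N k : ℕ) :
    ((k+1) * (N+1-k)) * Nat.choose (N-k) (k+1)
      = ((N+1-2*k) * (N-2*k)) * Nat.choose (N+1-k) k := by
  by_cases hk : k ≤ N
  · have h1 : Nat.choose (N-k) (k+1) * (k+1) = Nat.choose (N-k) k * (N-k-k) :=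
      Nat.choose_succ_right_eq _ _
    have h2 : Nat.choose (N-k) k * (N-k+1) = Nat.choose (N-k+1) k * (N-k+1-k) :=
      Nat.choose_mul_succ_eq _ _
    have e1 : N-k+1 = N+1-k := by omega
    have e2 : N-k-k = N-2*k := by omega
    have e3 : N-k+1-k = N+1-2*k := by omega
    rw [e2] at h1
    rw [e3] at h2
    rw [e1] at h2
    calc ((k+1) * (N+1-k)) * Nat.choose (N-k) (k+1)
        = (N+1-k) * (Nat.choose (N-k) (k+1) * (k+1)) := by ring
      _ = (N+1-k) * (Nat.choose (N-k) k * (N-2*k)) := by rw [h1]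
      _ = (N-2*k) * (Nat.choose (N-k) k * (N+1-k)) := by ring
      _ = (N-2*k) * (Nat.choose (N+1-k) k * (N+1-2*k)) := by rw [h2]
      _ = ((N+1-2*k) * (N-2*k)) * Nat.choose (N+1-k) k := by ring
  · have e1 : N - k = 0 := by omega
    have e2 : N + 1 - 2*k = 0 := by omega
    rw [e1, e2, Nat.choose_zero_succ]
    ring

lemma mul_cancel_aux1 {A B x y : ℕ} (hA : 0 < A) (hr : A*x = B*y) (hc : B ≤ A)
    (h : y < x) : False := by
  have h5 : A*(y+1) ≤ A*x := Nat.mul_le_mul (le_refl A) h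
  have h6 : B*y ≤ A*y := Nat.mul_le_mul hc (le_refl y)
  nlinarith [h5, h6, hr, hA]

lemma mul_cancel_aux2 {A B x y : ℕ} (hy : 0 < y) (hr : A*x = B*y) (hAB : A < B)
    (hxy : x ≤ y) : False := by
  have h5 : A*x ≤ A*y := Nat.mul_le_mul (le_refl A) hxy
  have h6 : A*y < B*y := mul_lt_mul_of_pos_right hAB hy
  omega

lemma chooseCmp_iff (N k : ℕ) :
    Nat.choose (N+1-k) k < Nat.choose (N-k) (k+1) ↔
      (2*k+1 ≤ N ∧ (k+1) * (N+1-k) < (N+1-2*k) * (N-2*k)) := by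
  constructor
  · intro h
    have hpos : 0 < Nat.choose (N-k) (k+1) := lt_of_le_of_lt (Nat.zero_le _) h
    have hk : k + 1 ≤ N - k := by
      by_contra hc
      rw [Nat.choose_eq_zero_of_lt (by omega)] at hpos
      exact absurd hpos (lt_irrefl 0)
    have hN : 2*k+1 ≤ N := by omega
    refine ⟨hN, ?_⟩
    have hp : 0 < Nat.choose (N+1-k) k := Nat.choose_pos (by omega)
    by_contra hc
    push_neg at hc
    have hA : 0 < (k+1) * (N+1-k) := Nat.mul_pos (by omega) (by omega)
    exact mul_cancel_aux1 hA (ratio_eq N k) hc h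
  · rintro ⟨hN, hAB⟩
    have hp : 0 < Nat.choose (N+1-k) k := Nat.choose_pos (by omega)
    by_contra hc
    push_neg at hc
    exact mul_cancel_aux2 hp (ratio_eq N k) hAB hc

lemma Pdown (N k : ℕ) (h : Nat.choose (N-k) (k+1) < Nat.choose (N-k-1) (k+2)) :
    Nat.choose (N+1-k) k < Nat.choose (N-k) (k+1) := by
  have e1 : N+1-(k+1) = N-k := by omega
  have e2 : N-(k+1) = N-k-1 := by omega
  have H := (chooseCmp_iff N (k+1)).mp (by rw [e1, e2]; exact h)
  obtain ⟨h1, h2⟩ := H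
  refine (chooseCmp_iff N k).mpr ⟨by omega, ?_⟩
  obtain ⟨c, rfl⟩ : ∃ c, N = 2*k+3+c := ⟨N - (2*k+3), by omega⟩
  have f1 : 2*k+3+c+1-(k+1) = k+3+c := by omega
  have f2 : 2*k+3+c+1-2*(k+1) = c+2 := by omega
  have f3 : 2*k+3+c-2*(k+1) = c+1 := by omega
  have g1 : 2*k+3+c+1-k = k+4+c := by omega
  have g2 : 2*k+3+c+1-2*k = c+4 := by omega
  have g3 : 2*k+3+c-2*k = c+3 := by omega
  rw [f1, f2, f3] at h2
  rw [g1, g2, g3]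
  nlinarith [h2]

lemma QP1 (N k : ℕ) (hN : 1 ≤ N)
    (h : Nat.choose (N-k) k < Nat.choose (N-1-k) (k+1)) :
    Nat.choose (N+1-k) k < Nat.choose (N-k) (k+1) := by
  have e1 : N-1+1-k = N-k := by omega
  have H := (chooseCmp_iff (N-1) k).mp (by rw [e1]; exact h)
  obtain ⟨h1, h2⟩ := H
  refine (chooseCmp_iff N k).mpr ⟨by omega, ?_⟩
  obtain ⟨c, rfl⟩ : ∃ c, N = 2*k+2+c := ⟨N - (2*k+2), by omega⟩
  have f1 : 2*k+2+c-1+1-k = k+2+c := by omega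
  have f2 : 2*k+2+c-1+1-2*k = c+2 := by omega
  have f3 : 2*k+2+c-1-2*k = c+1 := by omega
  have g1 : 2*k+2+c+1-k = k+3+c := by omega
  have g2 : 2*k+2+c+1-2*k = c+3 := by omega
  have g3 : 2*k+2+c-2*k = c+2 := by omega
  rw [f1, f2, f3] at h2
  rw [g1, g2, g3]
  rcases le_or_gt (k+1) (2*c+4) with hc | hc
  · nlinarith [h2]
  · exfalso
    have : (2*c+5) * (3*c+6) ≤ (k+1) * (k+2+c) :=
      Nat.mul_le_mul (by omega) (by omega)
    nlinarith [h2, this]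

lemma QP2 (N k : ℕ) (hN : 1 ≤ N)
    (h : Nat.choose (N-k) (k+1) < Nat.choose (N-k-1) (k+2)) :
    Nat.choose (N-k) k < Nat.choose (N-1-k) (k+1) := by
  have e1 : N+1-(k+1) = N-k := by omega
  have e2 : N-(k+1) = N-k-1 := by omega
  have H := (chooseCmp_iff N (k+1)).mp (by rw [e1, e2]; exact h)
  obtain ⟨h1, h2⟩ := H
  have e3 : N-1+1-k = N-k := by omega
  have := (chooseCmp_iff (N-1) k).mpr ⟨by omega, ?_⟩
  · rwa [e3] at this
  · obtain ⟨c, rfl⟩ : ∃ c, N = 2*k+3+c := ⟨N - (2*k+3), by omega⟩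
    have f1 : 2*k+3+c+1-(k+1) = k+3+c := by omega
    have f2 : 2*k+3+c+1-2*(k+1) = c+2 := by omega
    have f3 : 2*k+3+c-2*(k+1) = c+1 := by omega
    have g1 : 2*k+3+c-1+1-k = k+3+c := by omega
    have g2 : 2*k+3+c-1+1-2*k = c+3 := by omega
    have g3 : 2*k+3+c-1-2*k = c+2 := by omega
    rw [f1, f2, f3] at h2
    rw [g1, g2, g3]
    nlinarith [h2]

open Finset in
open Classical in
lemma coeff_indepPoly {V : Type} [Fintype V] (G : SimpleGraph V) (k : ℕ) :
    (indepPoly G).coeff k =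
      (Finset.univ.filter (fun s : Finset V =>
        (∀ i ∈ s, ∀ j ∈ s, ¬ G.Adj i j) ∧ s.card = k)).card := by
  unfold indepPoly
  rw [Polynomial.finset_sum_coeff, Finset.card_filter]
  apply Finset.sum_congr rfl
  intro s _
  by_cases h : (∀ i ∈ s, ∀ j ∈ s, ¬ G.Adj i j)
  · rw [if_pos h, Polynomial.coeff_X_pow]
    by_cases h2 : s.card = k
    · rw [if_pos (h2.symm : k = s.card), if_pos (⟨h, h2⟩ : _ ∧ s.card = k)]
    · rw [if_neg (fun hc : k = s.card => h2 hc.symm),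
        if_neg (fun hc : _ ∧ s.card = k => h2 hc.2)]
  · rw [if_neg h, if_neg (by tauto), Polynomial.coeff_zero]

open Finset in
open Classical in
lemma indep_count_zero {V : Type} [Fintype V] (G : SimpleGraph V) :
    (Finset.univ.filter (fun s : Finset V =>
      (∀ i ∈ s, ∀ j ∈ s, ¬ G.Adj i j) ∧ s.card = 0)).card = 1 := by
  have : (Finset.univ.filter (fun s : Finset V =>
      (∀ i ∈ s, ∀ j ∈ s, ¬ G.Adj i j) ∧ s.card = 0)) = {∅} := by
    ext s
    simp only [mem_filter, mem_univ, true_and, Finset.card_eq_zero, mem_singleton]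
    constructor
    · rintro ⟨-, rfl⟩; rfl
    · rintro rfl
      exact ⟨fun i hi => absurd hi (Finset.notMem_empty i), rfl⟩
  rw [this, Finset.card_singleton]

lemma lollipop_adj_ll {m n : ℕ} (i j : Fin m) :
    (lollipop m n).Adj (Sum.inl i) (Sum.inl j) ↔ i ≠ j := by
  rw [lollipop, SimpleGraph.fromRel_adj]
  simp

lemma lollipop_adj_rr {m n : ℕ} (i j : Fin n) :
    (lollipop m n).Adj (Sum.inr i) (Sum.inr j) ↔ ((j:ℕ) = (i:ℕ)+1 ∨ (i:ℕ) = (j:ℕ)+1) := by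
  rw [lollipop, SimpleGraph.fromRel_adj]
  simp only [ne_eq, Sum.inr.injEq]
  constructor
  · rintro ⟨hne, h | h⟩
    · exact Or.inl h
    · exact Or.inr h
  · intro h
    refine ⟨fun hc => ?_, h⟩
    subst hc
    omega

lemma lollipop_adj_lr {m n : ℕ} (i : Fin m) (j : Fin n) :
    (lollipop m n).Adj (Sum.inl i) (Sum.inr j) ↔ ((i:ℕ) = m-1 ∧ (j:ℕ) = 0) := by
  rw [lollipop, SimpleGraph.fromRel_adj]
  simp

/-- projection to ℕ of right vertices -/
def val2 {m n : ℕ} : Fin m ⊕ Fin n → ℕ := Sum.elim (fun _ => 0) Fin.val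

open Finset in
lemma mem_image_val2 {m n : ℕ} (s : Finset (Fin m ⊕ Fin n))
    (hs : ∀ a : Fin m, Sum.inl a ∉ s) (b : Fin n) :
    (b : ℕ) ∈ s.image val2 ↔ Sum.inr b ∈ s := by
  simp only [mem_image]
  constructor
  · rintro ⟨x, hx, hval⟩
    match x with
    | Sum.inl a => exact absurd hx (hs a)
    | Sum.inr b' =>
      have : b' = b := Fin.ext hval
      exact this ▸ hx
  · intro h
    exact ⟨Sum.inr b, h, rfl⟩

open Finset in
lemma injOn_val2 {m n : ℕ} (s : Finset (Fin m ⊕ Fin n))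
    (hs : ∀ a : Fin m, Sum.inl a ∉ s) :
    Set.InjOn (val2 (m := m) (n := n)) s := by
  intro x hx y hy hxy
  match x, y with
  | Sum.inl a, _ => exact absurd hx (hs a)
  | _, Sum.inl a => exact absurd hy (hs a)
  | Sum.inr b, Sum.inr b' => exact congrArg Sum.inr (Fin.ext hxy)

open Finset in
lemma right_ext {m n : ℕ} (s t : Finset (Fin m ⊕ Fin n))
    (hs : ∀ a : Fin m, Sum.inl a ∉ s) (ht : ∀ a : Fin m, Sum.inl a ∉ t)
    (h : s.image val2 = t.image val2) : s = t := by
  ext x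
  match x with
  | Sum.inl a => simp [hs a, ht a]
  | Sum.inr b =>
    rw [← mem_image_val2 s hs b, ← mem_image_val2 t ht b, h]

open Finset in
lemma image_val2_map {m n : ℕ} (t : Finset ℕ) (bound : ∀ x ∈ t, x < n) :
    (((t.attachFin bound).map ⟨Sum.inr, Sum.inr_injective⟩ :
        Finset (Fin m ⊕ Fin n)).image val2) = t := by
  ext y
  simp only [mem_image, mem_map, Function.Embedding.coeFn_mk]
  constructor
  · rintro ⟨x, ⟨b, hb, rfl⟩, hval⟩
    rw [Finset.mem_attachFin] at hb
    exact hval ▸ hb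
  · intro hy
    exact ⟨Sum.inr ⟨y, bound y hy⟩, ⟨⟨y, bound y hy⟩, (Finset.mem_attachFin bound).mpr hy, rfl⟩, rfl⟩

open Finset in
lemma noLeft_map {m n : ℕ} (M : Finset (Fin n)) (a : Fin m) :
    Sum.inl a ∉ (M.map ⟨Sum.inr, Sum.inr_injective⟩ : Finset (Fin m ⊕ Fin n)) := by
  simp

open Classical Finset in
lemma count_right (m n k : ℕ) :
    (Finset.univ.filter (fun s : Finset (Fin m ⊕ Fin n) =>
      ((∀ x ∈ s, ∀ y ∈ s, ¬ (lollipop m n).Adj x y) ∧ s.card = k)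
        ∧ ∀ a : Fin m, Sum.inl a ∉ s)).card
    = Nat.choose (n + 1 - k) k := by
  rw [show n + 1 - k = n - 0 + 1 - k by omega, ← noTwo_count 0 n k, ← Finset.range_eq_Ico]
  apply Finset.card_bij (fun s _ => s.image val2)
  · rintro s hs
    simp only [mem_filter, mem_univ, true_and] at hs
    obtain ⟨⟨hind, hcard⟩, hnl⟩ := hs
    simp only [mem_filter, mem_powerset]
    refine ⟨?_, ?_, ?_⟩
    · intro y hy
      simp only [mem_image] at hy
      obtain ⟨x, hx, rfl⟩ := hy
      match x with
      | Sum.inl a => exact absurd hx (hnl a)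
      | Sum.inr b => simpa [val2, Finset.mem_Ico] using b.isLt
    · intro y hy hy1
      simp only [mem_image] at hy hy1
      obtain ⟨x, hx, hval⟩ := hy
      obtain ⟨x', hx', hval'⟩ := hy1
      match x, x' with
      | Sum.inl a, _ => exact absurd hx (hnl a)
      | _, Sum.inl a => exact absurd hx' (hnl a)
      | Sum.inr b, Sum.inr b' =>
        refine hind _ hx _ hx' ((lollipop_adj_rr b b').mpr (Or.inl ?_))
        simp only [val2, Sum.elim_inr] at hval hval'
        omega
    · rw [Finset.card_image_of_injOn (injOn_val2 s hnl), hcard]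
  · intro s hs t ht h
    simp only [mem_filter, mem_univ, true_and] at hs ht
    exact right_ext s t hs.2 ht.2 h
  · intro t ht
    simp only [mem_filter, mem_powerset] at ht
    obtain ⟨hsub, hnt, hcard⟩ := ht
    have bound : ∀ x ∈ t, x < n := fun x hx => Finset.mem_range.mp (hsub hx)
    refine ⟨(t.attachFin bound).map ⟨Sum.inr, Sum.inr_injective⟩, ?_, image_val2_map t bound⟩
    simp only [mem_filter, mem_univ, true_and]
    refine ⟨⟨?_, ?_⟩, fun a => noLeft_map _ a⟩
    · intro x hx y hy
      simp only [mem_map, Function.Embedding.coeFn_mk] at hx hy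
      obtain ⟨b, hb, rfl⟩ := hx
      obtain ⟨b', hb', rfl⟩ := hy
      rw [Finset.mem_attachFin bound] at hb hb'
      rw [lollipop_adj_rr]
      rintro (hc | hc)
      · exact hnt _ hb (hc ▸ hb')
      · exact hnt _ hb' (hc ▸ hb)
    · rw [Finset.card_map, Finset.card_attachFin, hcard]

open Classical Finset in
lemma count_left (m n k : ℕ) (i : Fin m) (A : Finset ℕ) (hsubA : A ⊆ Finset.range n)
    (hchar : ∀ b : Fin n, ((b:ℕ) ∈ A ↔ ¬ (lollipop m n).Adj (Sum.inl i) (Sum.inr b))) :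
    (Finset.univ.filter (fun s : Finset (Fin m ⊕ Fin n) =>
      ((∀ x ∈ s, ∀ y ∈ s, ¬ (lollipop m n).Adj x y) ∧ s.card = k+1)
        ∧ Sum.inl i ∈ s)).card
    = (A.powerset.filter (fun t => NoTwo t ∧ t.card = k)).card := by
  apply Finset.card_bij (fun s _ => (s.erase (Sum.inl i)).image val2)
  · rintro s hs
    simp only [mem_filter, mem_univ, true_and] at hs
    obtain ⟨⟨hind, hcard⟩, hmem⟩ := hs
    have hnl : ∀ a : Fin m, Sum.inl a ∉ s.erase (Sum.inl i) := by
      intro a ha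
      have ha' := Finset.mem_of_mem_erase ha
      have hne : a ≠ i := by
        intro hc
        exact Finset.ne_of_mem_erase ha (by rw [hc])
      exact hind _ ha' _ hmem ((lollipop_adj_ll a i).mpr hne)
    simp only [mem_filter, mem_powerset]
    refine ⟨?_, ?_, ?_⟩
    · intro y hy
      simp only [mem_image] at hy
      obtain ⟨x, hx, hval⟩ := hy
      match x with
      | Sum.inl a => exact absurd hx (hnl a)
      | Sum.inr b =>
        simp only [val2, Sum.elim_inr] at hval
        rw [← hval]
        exact (hchar b).mpr (hind _ hmem _ (Finset.mem_of_mem_erase hx))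
    · intro y hy hy1
      simp only [mem_image] at hy hy1
      obtain ⟨x, hx, hval⟩ := hy
      obtain ⟨x', hx', hval'⟩ := hy1
      match x, x' with
      | Sum.inl a, _ => exact absurd hx (hnl a)
      | _, Sum.inl a => exact absurd hx' (hnl a)
      | Sum.inr b, Sum.inr b' =>
        refine hind _ (Finset.mem_of_mem_erase hx) _ (Finset.mem_of_mem_erase hx')
          ((lollipop_adj_rr b b').mpr (Or.inl ?_))
        simp only [val2, Sum.elim_inr] at hval hval'
        omega
    · rw [Finset.card_image_of_injOn (injOn_val2 _ hnl),
        Finset.card_erase_of_mem hmem, hcard]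
      omega
  · intro s hs t ht h
    simp only [mem_filter, mem_univ, true_and] at hs ht
    have hnls : ∀ a : Fin m, Sum.inl a ∉ s.erase (Sum.inl i) := by
      intro a ha
      have ha' := Finset.mem_of_mem_erase ha
      have hne : a ≠ i := fun hc => Finset.ne_of_mem_erase ha (by rw [hc])
      exact hs.1.1 _ ha' _ hs.2 ((lollipop_adj_ll a i).mpr hne)
    have hnlt : ∀ a : Fin m, Sum.inl a ∉ t.erase (Sum.inl i) := by
      intro a ha
      have ha' := Finset.mem_of_mem_erase ha
      have hne : a ≠ i := fun hc => Finset.ne_of_mem_erase ha (by rw [hc])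
      exact ht.1.1 _ ha' _ ht.2 ((lollipop_adj_ll a i).mpr hne)
    have he : s.erase (Sum.inl i) = t.erase (Sum.inl i) :=
      right_ext _ _ hnls hnlt h
    rw [← Finset.insert_erase hs.2, ← Finset.insert_erase ht.2, he]
  · intro t ht
    simp only [mem_filter, mem_powerset] at ht
    obtain ⟨hsub, hnt, hcard⟩ := ht
    have bound : ∀ x ∈ t, x < n := fun x hx => Finset.mem_range.mp (hsubA (hsub hx))
    set M : Finset (Fin m ⊕ Fin n) := (t.attachFin bound).map ⟨Sum.inr, Sum.inr_injective⟩
      with hM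
    have hnlM : ∀ a : Fin m, Sum.inl a ∉ M := by
      rw [hM]; exact fun a => noLeft_map _ a
    have hiM : Sum.inl i ∉ M := hnlM i
    have hMadj : ∀ b : Fin n, Sum.inr b ∈ M → ¬ (lollipop m n).Adj (Sum.inl i) (Sum.inr b) := by
      intro b hb
      rw [hM, Finset.mem_map] at hb
      obtain ⟨b', hb', hbe⟩ := hb
      cases Sum.inr_injective hbe
      rw [Finset.mem_attachFin bound] at hb'
      exact (hchar _).mp (hsub hb')
    refine ⟨insert (Sum.inl i) M, ?_, ?_⟩
    · simp only [mem_filter, mem_univ, true_and]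
      refine ⟨⟨?_, ?_⟩, Finset.mem_insert_self _ _⟩
      · intro x hx y hy
        rcases Finset.mem_insert.mp hx with rfl | hx
        · rcases Finset.mem_insert.mp hy with rfl | hy
          · exact SimpleGraph.irrefl _
          · cases y with
            | inl a => exact absurd hy (hnlM a)
            | inr b => exact hMadj b hy
        · rcases Finset.mem_insert.mp hy with rfl | hy
          · cases x with
            | inl a => exact absurd hx (hnlM a)
            | inr b => exact fun hadj => hMadj b hx hadj.symm
          · cases x with
            | inl a => exact absurd hx (hnlM a)
            | inr b =>
              cases y with
              | inl a => exact absurd hy (hnlM a)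
              | inr b' =>
                rw [hM, Finset.mem_map] at hx hy
                obtain ⟨c, hc, hce⟩ := hx
                obtain ⟨c', hc', hce'⟩ := hy
                cases Sum.inr_injective hce
                cases Sum.inr_injective hce'
                rw [Finset.mem_attachFin bound] at hc hc'
                rw [lollipop_adj_rr]
                rintro (h | h)
                · exact hnt _ hc (h ▸ hc')
                · exact hnt _ hc' (h ▸ hc)
      · rw [Finset.card_insert_of_notMem hiM, hM, Finset.card_map,
          Finset.card_attachFin, hcard]
    · rw [Finset.erase_insert hiM, hM, image_val2_map]

open Classical Finset in
lemma path_count (n k : ℕ) :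
    (Finset.univ.filter (fun s : Finset (Fin n) =>
      (∀ x ∈ s, ∀ y ∈ s, ¬ (SimpleGraph.pathGraph n).Adj x y) ∧ s.card = k)).card
    = Nat.choose (n + 1 - k) k := by
  rw [show n + 1 - k = n - 0 + 1 - k by omega, ← noTwo_count 0 n k, ← Finset.range_eq_Ico]
  apply Finset.card_bij (fun s _ => s.image Fin.val)
  · rintro s hs
    simp only [mem_filter, mem_univ, true_and] at hs
    obtain ⟨hind, hcard⟩ := hs
    simp only [mem_filter, mem_powerset]
    refine ⟨?_, ?_, ?_⟩
    · intro y hy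
      simp only [mem_image] at hy
      obtain ⟨x, hx, rfl⟩ := hy
      simpa using x.isLt
    · intro y hy hy1
      simp only [mem_image] at hy hy1
      obtain ⟨x, hx, hval⟩ := hy
      obtain ⟨x', hx', hval'⟩ := hy1
      exact hind _ hx _ hx' (SimpleGraph.pathGraph_adj.mpr (Or.inl (by omega)))
    · rw [Finset.card_image_of_injective _ Fin.val_injective, hcard]
  · intro s hs t ht h
    exact Finset.image_injective Fin.val_injective h
  · intro t ht
    simp only [mem_filter, mem_powerset] at ht
    obtain ⟨hsub, hnt, hcard⟩ := ht
    have bound : ∀ x ∈ t, x < n := fun x hx => Finset.mem_range.mp (hsub hx)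
    refine ⟨t.attachFin bound, ?_, ?_⟩
    · simp only [mem_filter, mem_univ, true_and]
      refine ⟨?_, ?_⟩
      · intro x hx y hy hadj
        rw [Finset.mem_attachFin bound] at hx hy
        rcases SimpleGraph.pathGraph_adj.mp hadj with h | h
        · exact hnt _ hx (h ▸ hy)
        · exact hnt _ hy (h ▸ hx)
      · rw [Finset.card_attachFin, hcard]
    · ext y
      simp only [mem_image]
      constructor
      · rintro ⟨x, hx, rfl⟩
        rw [Finset.mem_attachFin bound] at hx
        exact hx
      · intro hy
        exact ⟨⟨y, bound y hy⟩, (Finset.mem_attachFin bound).mpr hy, rfl⟩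

open Classical Finset in
lemma lollipop_count (m n : ℕ) (hm : 1 ≤ m) (hn : 1 ≤ n) (k : ℕ) :
    (Finset.univ.filter (fun s : Finset (Fin m ⊕ Fin n) =>
      (∀ x ∈ s, ∀ y ∈ s, ¬ (lollipop m n).Adj x y) ∧ s.card = k+1)).card
    = Nat.choose (n-k) (k+1)
      + ((m-1) * Nat.choose (n+1-k) k + Nat.choose (n-k) k) := by
  set S := Finset.univ.filter (fun s : Finset (Fin m ⊕ Fin n) =>
      (∀ x ∈ s, ∀ y ∈ s, ¬ (lollipop m n).Adj x y) ∧ s.card = k+1) with hS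
  have hsplit := Finset.card_filter_add_card_filter_not (s := S)
    (p := fun s => ∀ a : Fin m, Sum.inl a ∉ s)
  -- right-only piece
  have h1 : (S.filter (fun s => ∀ a : Fin m, Sum.inl a ∉ s)).card
      = Nat.choose (n-k) (k+1) := by
    rw [hS, Finset.filter_filter]
    rw [show Nat.choose (n-k) (k+1) = Nat.choose (n+1-(k+1)) (k+1) by
      congr 1; omega]
    exact count_right m n (k+1)
  -- left pieces
  have h2 : S.filter (fun s => ¬ ∀ a : Fin m, Sum.inl a ∉ s)
      = Finset.univ.biUnion (fun a : Fin m =>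
          Finset.univ.filter (fun s : Finset (Fin m ⊕ Fin n) =>
            ((∀ x ∈ s, ∀ y ∈ s, ¬ (lollipop m n).Adj x y) ∧ s.card = k+1)
              ∧ Sum.inl a ∈ s)) := by
    ext s
    simp only [hS, mem_filter, mem_univ, true_and, mem_biUnion, not_forall, not_not]
    tauto
  have hdisj : ∀ a ∈ (Finset.univ : Finset (Fin m)), ∀ b ∈ Finset.univ, a ≠ b →
      Disjoint (Finset.univ.filter (fun s : Finset (Fin m ⊕ Fin n) =>
            ((∀ x ∈ s, ∀ y ∈ s, ¬ (lollipop m n).Adj x y) ∧ s.card = k+1)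
              ∧ Sum.inl a ∈ s))
        (Finset.univ.filter (fun s : Finset (Fin m ⊕ Fin n) =>
            ((∀ x ∈ s, ∀ y ∈ s, ¬ (lollipop m n).Adj x y) ∧ s.card = k+1)
              ∧ Sum.inl b ∈ s)) := by
    intro a _ b _ hab
    rw [Finset.disjoint_left]
    intro s hsa hsb
    simp only [mem_filter, mem_univ, true_and] at hsa hsb
    exact hsa.1.1 _ hsa.2 _ hsb.2 ((lollipop_adj_ll a b).mpr hab)
  have h3 : ∀ a : Fin m,
      (Finset.univ.filter (fun s : Finset (Fin m ⊕ Fin n) =>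
        ((∀ x ∈ s, ∀ y ∈ s, ¬ (lollipop m n).Adj x y) ∧ s.card = k+1)
          ∧ Sum.inl a ∈ s)).card
      = if (a:ℕ) = m-1 then Nat.choose (n-k) k else Nat.choose (n+1-k) k := by
    intro a
    by_cases ha : (a:ℕ) = m-1
    · rw [if_pos ha]
      rw [show Nat.choose (n-k) k = Nat.choose (n-1+1-k) k by congr 1; omega]
      rw [← noTwo_count 1 n k]
      apply count_left m n k a (Finset.Ico 1 n)
      · intro x hx
        rw [Finset.mem_Ico] at hx
        exact Finset.mem_range.mpr hx.2
      · intro b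
        rw [Finset.mem_Ico, lollipop_adj_lr]
        constructor
        · rintro ⟨hb1, -⟩ ⟨-, hb0⟩
          omega
        · intro hna
          constructor
          · by_contra hc
            exact hna ⟨ha, by omega⟩
          · exact b.isLt
    · rw [if_neg ha]
      rw [show Nat.choose (n+1-k) k = Nat.choose (n-0+1-k) k by rw [Nat.sub_zero]]
      rw [← noTwo_count 0 n k, ← Finset.range_eq_Ico]
      apply count_left m n k a (Finset.range n)
      · exact subset_rfl
      · intro b
        rw [Finset.mem_range, lollipop_adj_lr]
        constructor
        · rintro hb ⟨hc, -⟩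
          exact ha hc
        · intro _
          exact b.isLt
  have h4 : ∑ a : Fin m, (if (a:ℕ) = m-1 then Nat.choose (n-k) k
      else Nat.choose (n+1-k) k)
      = (m-1) * Nat.choose (n+1-k) k + Nat.choose (n-k) k := by
    have hflt : Finset.univ.filter (fun a : Fin m => (a:ℕ) = m-1)
        = {(⟨m-1, by omega⟩ : Fin m)} := by
      ext a
      simp only [mem_filter, mem_univ, true_and, mem_singleton, Fin.ext_iff]
    rw [Finset.sum_ite, Finset.sum_const, Finset.sum_const, hflt]
    have hcompl : (Finset.univ.filter (fun a : Fin m => ¬ (a:ℕ) = m-1)).card = m - 1 := by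
      have := Finset.card_filter_add_card_filter_not
        (s := (Finset.univ : Finset (Fin m))) (p := fun a : Fin m => (a:ℕ) = m-1)
      rw [hflt] at this
      simp only [Finset.card_singleton, Finset.card_univ, Fintype.card_fin] at this
      omega
    rw [hcompl, Finset.card_singleton]
    simp only [smul_eq_mul, one_mul]
    ring
  rw [h1, h2, Finset.card_biUnion hdisj] at hsplit
  rw [← hsplit]
  have : ∑ a : Fin m, (Finset.univ.filter (fun s : Finset (Fin m ⊕ Fin n) =>
        ((∀ x ∈ s, ∀ y ∈ s, ¬ (lollipop m n).Adj x y) ∧ s.card = k+1)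
          ∧ Sum.inl a ∈ s)).card
      = (m-1) * Nat.choose (n+1-k) k + Nat.choose (n-k) k := by
    rw [← h4]
    exact Finset.sum_congr rfl (fun a _ => h3 a)
  omega

lemma card_filter_ext {α : Type*} (s : Finset α) (p q : α → Prop)
    (hp : DecidablePred p) (hq : DecidablePred q) (h : ∀ a, p a ↔ q a) :
    (@Finset.filter α p hp s).card = (@Finset.filter α q hq s).card := by
  refine congrArg Finset.card ?_
  exact @Finset.filter_congr _ _ _ hp hq _ (fun x _ => h x)

/-- For all `m, n ≥ 1`, the mode `η_{m,n}` of the independence polynomial of the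
lollipop graph `L_{m,n}` lies in `{λ_n, λ_n + 1}`, where `λ_n` is the mode of the
independence polynomial of the path `P_n`. -/
theorem lollipop_mode_mem (m n : ℕ) (hm : 1 ≤ m) (hn : 1 ≤ n) (l e : ℕ)
    (hl : PolyIsMode (indepPoly (SimpleGraph.pathGraph n)) l)
    (he : PolyIsMode (indepPoly (lollipop m n)) e) :
    e = l ∨ e = l + 1 := by
  classical
  obtain ⟨hl0, hl2, hl3⟩ := hl
  obtain ⟨he0, he2, he3⟩ := he
  have hpc : ∀ k, (indepPoly (SimpleGraph.pathGraph n)).coeff k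
      = Nat.choose (n+1-k) k := fun k => by
    rw [coeff_indepPoly]
    refine Eq.trans ?_ (path_count n k)
    exact card_filter_ext _ _ _ _ _ (fun a => Iff.rfl)
  have hQ0 : (indepPoly (lollipop m n)).coeff 0 = 1 := by
    rw [coeff_indepPoly]
    refine Eq.trans ?_ (indep_count_zero (lollipop m n))
    exact card_filter_ext _ _ _ _ _ (fun a => Iff.rfl)
  have hQs : ∀ k, (indepPoly (lollipop m n)).coeff (k+1)
      = Nat.choose (n-k) (k+1)
        + ((m-1) * Nat.choose (n+1-k) k + Nat.choose (n-k) k) := fun k => by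
    rw [coeff_indepPoly]
    refine Eq.trans ?_ (lollipop_count m n hm hn k)
    exact card_filter_ext _ _ _ _ _ (fun a => Iff.rfl)
  -- Part B : lollipop coefficients are non-increasing from l+1 on
  have hB : ∀ j, l + 1 ≤ j →
      (indepPoly (lollipop m n)).coeff (j+1) ≤ (indepPoly (lollipop m n)).coeff j := by
    intro j hj
    obtain ⟨j', rfl⟩ : ∃ j', j = j' + 1 := ⟨j - 1, by omega⟩
    have hp1 := hl3 (j'+1) (by omega)
    have hp2 := hl3 j' (by omega)
    rw [hpc, hpc] at hp1 hp2
    -- hp1 : C(n+1-(j'+2)) (j'+2) ≤ C(n+1-(j'+1)) (j'+1)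
    -- hp2 : C(n+1-(j'+1)) (j'+1) ≤ C(n+1-j') j'
    rw [hQs (j'+1), hQs j']
    have key1 : Nat.choose (n-(j'+1)) (j'+1+1) ≤ Nat.choose (n-j') (j'+1) := by
      convert hp1 using 2 <;> omega
    have hp2' : Nat.choose (n-j') (j'+1) ≤ Nat.choose (n+1-j') j' := by
      convert hp2 using 2; omega
    have key2 : Nat.choose (n+1-(j'+1)) (j'+1) ≤ Nat.choose (n+1-j') j' := by
      convert hp2 using 2
    have key3 : Nat.choose (n-(j'+1)) (j'+1) ≤ Nat.choose (n-j') j' := by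
      by_contra hc
      push_neg at hc
      have hq : Nat.choose (n-j') j' < Nat.choose (n-1-j') (j'+1) := by
        have e : n-1-j' = n-(j'+1) := by omega
        rw [e]; exact hc
      have := QP1 n j' hn hq
      -- this : C(n+1-j') j' < C(n-j') (j'+1)
      omega
    exact Nat.add_le_add key1 (Nat.add_le_add (Nat.mul_le_mul_left _ key2) key3)
  -- Part A : strict increase at l
  have hA : ∀ l'', l = l'' + 1 →
      (indepPoly (lollipop m n)).coeff l'' < (indepPoly (lollipop m n)).coeff (l''+1) := by
    intro l'' hleq
    match l'' with
    | 0 =>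
      rw [hQ0, hQs 0]
      have e1 : Nat.choose (n-0) (0+1) = n := by
        rw [Nat.sub_zero]
        exact Nat.choose_one_right n
      have e2 : Nat.choose (n-0) 0 = 1 := Nat.choose_zero_right _
      omega
    | (l'''+1) =>
      have hstrict := hl2 (l'''+1) hleq
      rw [hpc, hpc] at hstrict
      -- hstrict : C(n+1-(l'''+1)) (l'''+1) < C(n+1-(l'''+1+1)) (l'''+1+1)
      rw [hQs l''', hQs (l'''+1)]
      have t1 : Nat.choose (n-l''') (l'''+1) < Nat.choose (n-(l'''+1)) (l'''+1+1) := by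
        convert hstrict using 2 <;> omega
      have hP : Nat.choose (n-l''') (l'''+1) < Nat.choose (n-l'''-1) (l'''+2) := by
        convert hstrict using 2 <;> omega
      have t2 : Nat.choose (n+1-l''') l''' ≤ Nat.choose (n+1-(l'''+1)) (l'''+1) := by
        have := Pdown n l''' hP
        -- this : C(n+1-l''') l''' < C(n-l''') (l'''+1)
        have e : n+1-(l'''+1) = n - l''' := by omega
        rw [e]
        omega
      have t3 : Nat.choose (n-l''') l''' ≤ Nat.choose (n-(l'''+1)) (l'''+1) := by
        have := QP2 n l''' hn hP
        -- this : C(n-l''') l''' < C(n-1-l''') (l'''+1)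
        have e : n-(l'''+1) = n-1-l''' := by omega
        rw [e]
        omega
      have := Nat.mul_le_mul_left (m-1) t2
      omega
  -- conclude
  rcases lt_trichotomy e l with h | h | h
  · exfalso
    obtain ⟨l'', rfl⟩ : ∃ l'', l = l'' + 1 := ⟨l - 1, by omega⟩
    have h1 := hA l'' rfl
    have h2 := he3 l'' (by omega)
    omega
  · exact Or.inl h
  · rcases eq_or_lt_of_le (show l + 1 ≤ e by omega) with h' | h'
    · exact Or.inr h'.symm
    · exfalso
      obtain ⟨j, rfl⟩ : ∃ j, e = j + 1 := ⟨e - 1, by omega⟩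
      have h1 := he2 j rfl
      have h2 := hB j (by omega)
      omega
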